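/- arXiv:2602.17370 — 3 statements merged into one kernel-verified Lean document; each statement's English description precedes it below -/
import Mathlib

section
/- Let k be a field of characteristic 0 and n ≥ 2 an integer, and let A = kQ/(p₂p₁) be the gentle algebra of the cylinder dissection together with the bilinear map μ̃ determined by μ̃(p₂,p₁) = q̄. Then for every k-bilinear map φ : A × A → A satisfying the Hochschild 2-cocycle identity a·φ(b,c) − φ(a·b,c) + φ(a,b·c) − φ(a,b)·c = 0 for all a,b,c ∈ A, there exist a scalar c₀ ∈ k and a k-linear map f : A → A such that φ(a,b) = c₀·μ̃(a,b) + a·f(b) − f(a·b) + f(a)·b for all a,b ∈ A; moreover the scalar c₀ is uniquely determined by φ. (Equivalently: the second Hochschild cohomology HH²(A,A) is one-dimensional over k, spanned by the class of μ̃.) -/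
/-!
`CylIdx n` indexes the `k`-basis of the gentle algebra `A = kQ/(p₂p₁)` of the cylinder
dissection: the quiver `Q` has vertices `u₀, …, u_{n-1}, v` (encoded as `0, …, n-1, n`),
arrows `q_i : u_{i-1} → u_i` for `1 ≤ i ≤ n-1`, `p₁ : u₀ → v` and `p₂ : v → u_{n-1}`.
The basis of `A` consists of the trivial paths `e x`, the arrows `p₁`, `p₂`, and the
paths `q i j = q_j ⋯ q_i` for `1 ≤ i ≤ j ≤ n-1`.
-/
inductive CylIdx (n : ℕ) : Type
  | e : (x : ℕ) → x ≤ n → CylIdx n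
  | p1 : CylIdx n
  | p2 : CylIdx n
  | q : (i j : ℕ) → 1 ≤ i → i ≤ j → j ≤ n - 1 → CylIdx n

namespace CylIdx

/-- Source vertex of a basis path (vertex `u_x` is encoded `x`, the vertex `v` as `n`). -/
def src {n : ℕ} : CylIdx n → ℕ
  | e x _ => x
  | p1 => 0
  | p2 => n
  | q i _ _ _ _ => i - 1

/-- Target vertex of a basis path. -/
def tgt {n : ℕ} : CylIdx n → ℕ
  | e x _ => x
  | p1 => n
  | p2 => n - 1
  | q _ j _ _ _ => j

end CylIdx

/-- Structure constants of `A = kQ/(p₂p₁)`: the product `b · a` of two basis paths is a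
basis path (the concatenation) or zero; note `p₂ · p₁ = 0` is the gentle relation. -/
def cylMul {n : ℕ} : CylIdx n → CylIdx n → Option (CylIdx n)
  | .e x _, a => if x = a.tgt then some a else none
  | b, .e x _ => if b.src = x then some b else none
  | .q i' j' _ h2 h3, .q i j g1 g2 _ =>
      if h : i' = j + 1 then some (.q i j' g1 (by omega) h3) else none
  | _, _ => none

namespace CylHH

variable {k : Type*} [CommRing k] {A : Type*} [Ring A] [Algebra k A]

/-- The Hochschild 2-cocycle condition. -/
def IsCocycle (φ : A →ₗ[k] A →ₗ[k] A) : Prop :=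
  ∀ a b c : A, a * φ b c - φ (a * b) c + φ a (b * c) - φ a b * c = 0

/-- The Hochschild coboundary of a linear map. -/
def delta (f : A →ₗ[k] A) : A →ₗ[k] A →ₗ[k] A :=
  LinearMap.mk₂ k (fun a b => a * f b - f (a * b) + f a * b)
    (fun a a' b => by simp [add_mul, mul_add]; abel)
    (fun c a b => by simp [smul_mul_assoc, smul_sub, smul_add])
    (fun a b b' => by simp [add_mul, mul_add]; abel)
    (fun c a b => by simp [mul_smul_comm, smul_mul_assoc, smul_sub, smul_add])

lemma delta_apply (f : A →ₗ[k] A) (a b : A) :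
    delta f a b = a * f b - f (a * b) + f a * b := rfl

lemma delta_isCocycle (f : A →ₗ[k] A) : IsCocycle (delta (k := k) f) := by
  intro a b c
  simp only [delta_apply, mul_assoc, map_add, map_sub, mul_sub, mul_add, sub_mul, add_mul]
  abel

lemma IsCocycle.sub_delta {φ : A →ₗ[k] A →ₗ[k] A} (hφ : IsCocycle φ) (f : A →ₗ[k] A) :
    IsCocycle (φ - delta f) := by
  intro a b c
  have h1 := hφ a b c
  have h2 := delta_isCocycle (k := k) f a b c
  have h3 : a * (φ - delta f) b c - (φ - delta f) (a * b) c + (φ - delta f) a (b * c)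
      - (φ - delta f) a b * c
      = (a * φ b c - φ (a * b) c + φ a (b * c) - φ a b * c)
        - (a * delta f b c - delta f (a * b) c + delta f a (b * c) - delta f a b * c) := by
    simp only [LinearMap.sub_apply, mul_sub, sub_mul]; abel
  rw [h3, h1, h2, sub_zero]
lemma stepLeft {ι : Type*} [DecidableEq ι] (s : Finset ι) (e : ι → A)
    (h1 : ∑ x ∈ s, e x = 1)
    (horth : ∀ x ∈ s, ∀ y ∈ s, e x * e y = if x = y then e x else 0)
    (φ : A →ₗ[k] A →ₗ[k] A) (hφ : IsCocycle φ) (hR : ∀ a : A, φ a 1 = 0) :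
    ∃ g : A →ₗ[k] A, (∀ y ∈ s, ∀ b : A, (φ - delta g) (e y) b = 0) ∧
      (∀ a : A, (φ - delta g) a 1 = 0) := by
  set g : A →ₗ[k] A := ∑ x ∈ s, LinearMap.mulLeft k (e x) ∘ₗ φ (e x) with hg
  have hga : ∀ a : A, g a = ∑ x ∈ s, e x * φ (e x) a := by
    intro a; simp [hg, LinearMap.sum_apply]
  have hg1 : g 1 = 0 := by
    rw [hga]; refine Finset.sum_eq_zero fun x hx => by rw [hR, mul_zero]
  refine ⟨g, ?_, ?_⟩
  · intro y hy b
    have hyy : e y * e y = e y := by rw [horth y hy y hy, if_pos rfl]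
    have hA : e y * g b = e y * φ (e y) b := by
      rw [hga, Finset.mul_sum]
      rw [Finset.sum_eq_single_of_mem y hy]
      · rw [← mul_assoc, hyy]
      · intro x hx hxy
        rw [← mul_assoc, horth y hy x hx, if_neg (fun h => hxy h.symm), zero_mul]
    have hB : g (e y * b) = e y * φ (e y) b - φ (e y) b + g (e y) * b := by
      rw [hga]
      have hterm : ∀ x ∈ s, e x * φ (e x) (e y * b)
          = e x * φ (e x * e y) b - (e x * e x) * φ (e y) b + (e x * φ (e x) (e y)) * b := by
        intro x hx
        have hc := hφ (e x) (e y) b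
        have hx2 : φ (e x) (e y * b)
            - (φ (e x * e y) b - e x * φ (e y) b + φ (e x) (e y) * b)
            = e x * φ (e y) b - φ (e x * e y) b + φ (e x) (e y * b) - φ (e x) (e y) * b := by
          abel
        have : φ (e x) (e y * b) = φ (e x * e y) b - e x * φ (e y) b + φ (e x) (e y) * b :=
          sub_eq_zero.mp (hx2.trans hc)
        rw [this]
        simp only [mul_sub, mul_add, mul_assoc]
      rw [Finset.sum_congr rfl hterm, Finset.sum_add_distrib, Finset.sum_sub_distrib]
      congr 1
      · congr 1
        · rw [Finset.sum_eq_single_of_mem y hy]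
          · rw [horth y hy y hy, if_pos rfl]
          · intro x hx hxy
            rw [horth x hx y hy, if_neg hxy]
            simp
        · rw [← Finset.sum_mul]
          have : ∑ x ∈ s, e x * e x = 1 := by
            rw [← h1]; exact Finset.sum_congr rfl fun x hx => by
              rw [horth x hx x hx, if_pos rfl]
          rw [this, one_mul]
      · rw [← Finset.sum_mul, hga]
    have hrw : (φ - delta g) (e y) b
        = φ (e y) b - (e y * g b - g (e y * b) + g (e y) * b) := by
      simp [delta_apply]
    rw [hrw, hA, hB]
    abel
  · intro a
    simp [delta_apply, hg1, hR]

lemma stepRight {ι : Type*} [DecidableEq ι] (s : Finset ι) (e : ι → A)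
    (h1 : ∑ x ∈ s, e x = 1)
    (horth : ∀ x ∈ s, ∀ y ∈ s, e x * e y = if x = y then e x else 0)
    (φ : A →ₗ[k] A →ₗ[k] A) (hφ : IsCocycle φ)
    (hN1 : ∀ x ∈ s, ∀ b : A, φ (e x) b = 0) :
    ∃ h : A →ₗ[k] A, (∀ y ∈ s, ∀ b : A, (φ - delta h) (e y) b = 0) ∧
      (∀ y ∈ s, ∀ a : A, (φ - delta h) a (e y) = 0) := by
  set h : A →ₗ[k] A := ∑ x ∈ s, LinearMap.mulRight k (e x) ∘ₗ φ.flip (e x) with hh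
  have hha : ∀ a : A, h a = ∑ x ∈ s, φ a (e x) * e x := by
    intro a; simp [hh, LinearMap.sum_apply]
  have hN3 : ∀ x ∈ s, ∀ a b : A, φ (e x * a) b = e x * φ a b := by
    intro x hx a b
    have hc := hφ (e x) a b
    rw [hN1 x hx (a * b), hN1 x hx a] at hc
    simp only [zero_mul, sub_zero, add_zero] at hc
    exact (sub_eq_zero.mp hc).symm
  have hhe : ∀ y ∈ s, h (e y) = 0 := by
    intro y hy
    rw [hha]
    exact Finset.sum_eq_zero fun x hx => by rw [hN1 y hy, zero_mul]
  refine ⟨h, ?_, ?_⟩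
  · intro y hy b
    have hkey : h (e y * b) = e y * h b := by
      rw [hha, hha, Finset.mul_sum]
      refine Finset.sum_congr rfl fun x hx => ?_
      rw [hN3 y hy b (e x), mul_assoc]
    simp [delta_apply, hN1 y hy, hkey, hhe y hy]
  · intro y hy a
    have hyy : e y * e y = e y := by rw [horth y hy y hy, if_pos rfl]
    have hB : h (a * e y) = φ a (e y) * e y - φ a (e y) := by
      rw [hha]
      have hterm : ∀ x ∈ s, φ (a * e y) (e x) * e x
          = φ a (e y * e x) * e x - (φ a (e y) * e x) * e x := by
        intro x hx
        have hc := hφ a (e y) (e x)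
        rw [hN1 y hy (e x)] at hc
        rw [mul_zero] at hc
        have hx2 : φ (a * e y) (e x) - (φ a (e y * e x) - φ a (e y) * e x)
            = -(0 - φ (a * e y) (e x) + φ a (e y * e x) - φ a (e y) * e x) := by abel
        rw [hc, neg_zero] at hx2
        have : φ (a * e y) (e x) = φ a (e y * e x) - φ a (e y) * e x :=
          sub_eq_zero.mp hx2
        rw [this, sub_mul]
      rw [Finset.sum_congr rfl hterm, Finset.sum_sub_distrib]
      congr 1
      · rw [Finset.sum_eq_single_of_mem y hy]
        · rw [hyy]
        · intro x hx hxy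
          rw [horth y hy x hx, if_neg (fun hh' => hxy hh'.symm)]
          simp
      · have : ∀ x ∈ s, (φ a (e y) * e x) * e x = φ a (e y) * e x := by
          intro x hx
          rw [mul_assoc, horth x hx x hx, if_pos rfl]
        rw [Finset.sum_congr rfl this, ← Finset.mul_sum, h1, mul_one]
    have hha' : h a * e y = φ a (e y) * e y := by
      rw [hha, Finset.sum_mul]
      rw [Finset.sum_eq_single_of_mem y hy]
      · rw [mul_assoc, hyy]
      · intro x hx hxy
        rw [mul_assoc, horth x hx y hy, if_neg hxy, mul_zero]
    have hrw : (φ - delta h) a (e y)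
        = φ a (e y) - (a * h (e y) - h (a * e y) + h a * e y) := by
      simp [delta_apply]
    rw [hrw, hB, hha', hhe y hy, mul_zero]
    abel


def qq (n i j : ℕ) : CylIdx n := if h : 1 ≤ i ∧ i ≤ j ∧ j ≤ n - 1 then .q i j h.1 h.2.1 h.2.2 else .p1

/-- Extract the indices of a `q`-path. -/
def qIdx {n : ℕ} : CylIdx n → Option (ℕ × ℕ)
  | .q i j _ _ _ => some (i, j)
  | _ => none

lemma qq_eq {n : ℕ} (i j : ℕ) (hi : 1 ≤ i) (hij : i ≤ j) (hjn : j ≤ n - 1) :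
    qq n i j = CylIdx.q i j hi hij hjn := by
  rw [qq, dif_pos (⟨hi, hij, hjn⟩ : 1 ≤ i ∧ i ≤ j ∧ j ≤ n - 1)]

section
variable {n : ℕ}
variable (B : Module.Basis (CylIdx n) k A)
variable (hmul : ∀ b a : CylIdx n, B b * B a = (cylMul b a).elim 0 B)
include hmul

lemma mulE (x : ℕ) (h : x ≤ n) (c : CylIdx n) :
    B (.e x h) * B c = if x = c.tgt then B c else 0 := by
  rw [hmul]
  have hc : cylMul (.e x h) c = if x = c.tgt then some c else none := by
    cases c <;> simp [cylMul]
  rw [hc]; split <;> rfl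

lemma Emul (c : CylIdx n) (x : ℕ) (h : x ≤ n) :
    B c * B (.e x h) = if c.src = x then B c else 0 := by
  rw [hmul]
  have hc : cylMul c (.e x h) = if c.src = x then some c else none := by
    cases c with
    | e y hy =>
        by_cases hyx : y = x
        · subst hyx; simp [cylMul, CylIdx.src, CylIdx.tgt]
        · simp [cylMul, CylIdx.src, CylIdx.tgt, hyx]
    | p1 => simp [cylMul, CylIdx.src]
    | p2 => simp [cylMul, CylIdx.src]
    | q i j h1 h2 h3 => simp [cylMul, CylIdx.src]
  rw [hc]; split <;> rfl

lemma mulQQ (i' j' : ℕ) (h1 h2 h3) (i j : ℕ) (g1 g2 g3) :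
    B (.q i' j' h1 h2 h3 : CylIdx n) * B (.q i j g1 g2 g3) =
      if i' = j + 1 then B (qq n i j') else 0 := by
  rw [hmul]
  by_cases hij : i' = j + 1
  · rw [if_pos hij]
    have hc : cylMul (.q i' j' h1 h2 h3 : CylIdx n) (.q i j g1 g2 g3)
        = some (.q i j' g1 (by omega) h3) := by
      simp [cylMul, hij]
    rw [hc, qq, dif_pos (⟨g1, by omega, h3⟩ : 1 ≤ i ∧ i ≤ j' ∧ j' ≤ n - 1)]
    rfl
  · rw [if_neg hij]
    have hc : cylMul (.q i' j' h1 h2 h3 : CylIdx n) (.q i j g1 g2 g3) = none := by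
      simp [cylMul, hij]
    rw [hc]
    rfl

lemma projRepr (t s : ℕ) (ht : t ≤ n) (hs : s ≤ n) (v : A) (c : CylIdx n) :
    B.repr (B (.e t ht) * v * B (.e s hs)) c
      = if c.tgt = t ∧ c.src = s then B.repr v c else 0 := by
  classical
  have key : (Finsupp.lapply c ∘ₗ (B.repr.toLinearMap) ∘ₗ
      (LinearMap.mulRight k (B (.e s hs)) ∘ₗ LinearMap.mulLeft k (B (.e t ht))))
      = (if c.tgt = t ∧ c.src = s then (Finsupp.lapply c ∘ₗ B.repr.toLinearMap) else 0) := by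
    refine B.ext fun d => ?_
    simp only [LinearMap.comp_apply, LinearMap.mulLeft_apply, LinearMap.mulRight_apply,
      LinearEquiv.coe_toLinearMap, Finsupp.lapply_apply]
    rw [mulE B hmul t ht d]
    by_cases hd1 : t = d.tgt
    · rw [if_pos hd1, Emul B hmul d s hs]
      by_cases hd2 : d.src = s
      · rw [if_pos hd2, B.repr_self]
        by_cases hdc : d = c
        · subst hdc
          rw [if_pos ⟨hd1.symm, hd2⟩]
          simp
        · rw [Finsupp.single_apply, if_neg hdc]
          split
          · simp [Finsupp.single_apply, hdc]
          · simp
      · rw [if_neg hd2]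
        simp only [map_zero, Finsupp.coe_zero, Pi.zero_apply]
        split
        · rename_i hcond
          simp only [LinearMap.comp_apply, LinearEquiv.coe_toLinearMap, Finsupp.lapply_apply,
            B.repr_self, Finsupp.single_apply]
          split
          · rename_i hdc; subst hdc; exact absurd hcond.2 hd2
          · rfl
        · simp
    · rw [if_neg hd1]
      simp only [zero_mul, map_zero, Finsupp.coe_zero, Pi.zero_apply]
      split
      · rename_i hcond
        simp only [LinearMap.comp_apply, LinearEquiv.coe_toLinearMap, Finsupp.lapply_apply,
          B.repr_self, Finsupp.single_apply]
        split
        · rename_i hdc; subst hdc; exact absurd hcond.1.symm hd1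
        · rfl
      · simp
  have hv := LinearMap.congr_fun key v
  simp only [LinearMap.comp_apply, LinearMap.mulLeft_apply, LinearMap.mulRight_apply,
    LinearEquiv.coe_toLinearMap, Finsupp.lapply_apply] at hv
  rw [hv, apply_ite (fun L : A →ₗ[k] k => L v)]
  simp only [LinearMap.comp_apply, LinearEquiv.coe_toLinearMap, Finsupp.lapply_apply,
    LinearMap.zero_apply]

lemma repr_unique (v : A) (c : CylIdx n) (htc : c.tgt ≤ n) (hsc : c.src ≤ n)
    (hv : B (.e c.tgt htc) * v * B (.e c.src hsc) = v)
    (hu : ∀ d : CylIdx n, d.tgt = c.tgt → d.src = c.src → d = c) :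
    v = B.repr v c • B c := by
  apply B.repr.injective
  rw [map_smul, B.repr_self]
  ext d
  by_cases hdc : d = c
  · subst hdc
    simp [Finsupp.single_apply]
  · have hcond : ¬(d.tgt = c.tgt ∧ d.src = c.src) := fun hh => hdc (hu d hh.1 hh.2)
    have h0 : B.repr v d = 0 := by
      rw [← hv, projRepr B hmul, if_neg hcond]
    rw [h0]
    simp [Finsupp.single_apply, Ne.symm hdc]

lemma mulP2P1 : B (.p2 : CylIdx n) * B .p1 = 0 := by rw [hmul]; rfl
lemma mulP1P1 : B (.p1 : CylIdx n) * B .p1 = 0 := by rw [hmul]; rfl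
lemma mulP1P2 : B (.p1 : CylIdx n) * B .p2 = 0 := by rw [hmul]; rfl
lemma mulP2P2 : B (.p2 : CylIdx n) * B .p2 = 0 := by rw [hmul]; rfl
lemma mulP1Q (i j g1 g2 g3) : B (.p1 : CylIdx n) * B (.q i j g1 g2 g3) = 0 := by rw [hmul]; rfl
lemma mulP2Q (i j g1 g2 g3) : B (.p2 : CylIdx n) * B (.q i j g1 g2 g3) = 0 := by rw [hmul]; rfl
lemma mulQP1 (i j g1 g2 g3) : B (.q i j g1 g2 g3 : CylIdx n) * B .p1 = 0 := by rw [hmul]; rfl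
lemma mulQP2 (i j g1 g2 g3) : B (.q i j g1 g2 g3 : CylIdx n) * B .p2 = 0 := by rw [hmul]; rfl

end

end CylHH

open CylHH

/-- **HH²(A,A) is one-dimensional, spanned by the class of μ̃.**
Every Hochschild 2-cocycle `φ` of the gentle algebra `A = kQ/(p₂p₁)` of the cylinder
dissection differs from a unique scalar multiple of `μ̃` (the bilinear map with
`μ̃(p₂,p₁) = q̄ = q_{n-1}⋯q₁` and vanishing on all other pairs of basis paths) by a
Hochschild 2-coboundary. -/
theorem cylinder_HH2_one_dimensional
    (k : Type*) [Field k] [CharZero k]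
    (n : ℕ) (hn : 2 ≤ n)
    (A : Type*) [Ring A] [Algebra k A]
    (B : Module.Basis (CylIdx n) k A)
    (hmul : ∀ b a : CylIdx n, B b * B a = (cylMul b a).elim 0 B)
    (hone : (1 : A) = ∑ x ∈ (Finset.range (n + 1)).attach,
      B (.e x.1 (by have := Finset.mem_range.mp x.2; omega)))
    (μ : A →ₗ[k] A →ₗ[k] A)
    (hμ1 : μ (B .p2) (B .p1) = B (.q 1 (n - 1) le_rfl (by omega) le_rfl))
    (hμ0 : ∀ b a : CylIdx n, ¬(b = .p2 ∧ a = .p1) → μ (B b) (B a) = 0)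
    (φ : A →ₗ[k] A →ₗ[k] A)
    (hφ : ∀ a b c : A, a * φ b c - φ (a * b) c + φ a (b * c) - φ a b * c = 0) :
    ∃! c₀ : k, ∃ f : A →ₗ[k] A,
      ∀ a b : A, φ a b = c₀ • μ a b + a * f b - f (a * b) + f a * b := by
  classical
  have tgt_le : ∀ c : CylIdx n, c.tgt ≤ n := by
    intro c
    cases c with
    | e x hx => exact hx
    | p1 => exact le_rfl
    | p2 => exact Nat.sub_le n 1
    | q i j h1 h2 h3 => show j ≤ n; omega
  have src_le : ∀ c : CylIdx n, c.src ≤ n := by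
    intro c
    cases c with
    | e x hx => exact hx
    | p1 => exact Nat.zero_le n
    | p2 => exact le_rfl
    | q i j h1 h2 h3 => show i - 1 ≤ n; omega
  -- the idempotent family
  set s : Finset {x : ℕ // x ∈ Finset.range (n + 1)} := (Finset.range (n + 1)).attach with hs
  set e : {x : ℕ // x ∈ Finset.range (n + 1)} → A :=
    fun x => B (.e x.1 (by have := Finset.mem_range.mp x.2; omega)) with he
  have h1sum : ∑ x ∈ s, e x = 1 := hone.symm
  have horth : ∀ x ∈ s, ∀ y ∈ s, e x * e y = if x = y then e x else 0 := by
    intro x hx y hy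
    show B (.e x.1 _) * B (.e y.1 _) = _
    rw [mulE B hmul]
    show (if x.1 = y.1 then B (.e y.1 _) else 0) = _
    by_cases hxy : x = y
    · subst hxy; rw [if_pos rfl, if_pos rfl]
    · rw [if_neg (fun h => hxy (Subtype.ext h)), if_neg hxy]
  -- cocycle
  have hco : IsCocycle φ := hφ
  -- Step A : normalize at 1
  set f0 : A →ₗ[k] A := φ 1 with hf0
  set φ1 : A →ₗ[k] A →ₗ[k] A := φ - delta f0 with hφ1
  have hco1 : IsCocycle φ1 := hco.sub_delta f0
  have h1R1 : ∀ a : A, φ1 a 1 = 0 := by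
    intro a
    have h := hφ a 1 1
    simp only [one_mul, mul_one] at h
    have h' : φ a 1 = a * φ 1 1 := by
      have h2 : φ a 1 - a * φ 1 1 = -(a * φ 1 1 - φ a 1 + φ a 1 - φ a 1) := by abel
      rw [h, neg_zero] at h2
      exact sub_eq_zero.mp h2
    show φ a 1 - (a * φ 1 1 - φ 1 (a * 1) + φ 1 a * 1) = 0
    rw [mul_one, mul_one, h']
    abel
  -- Step B : left normalization at the vertex idempotents
  obtain ⟨g, hgN1, hgR⟩ := stepLeft s e h1sum horth φ1 hco1 h1R1
  set φ2 : A →ₗ[k] A →ₗ[k] A := φ1 - delta g with hφ2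
  have hco2 : IsCocycle φ2 := hco1.sub_delta g
  -- Step C : right normalization
  obtain ⟨hmap, hhN1, hhN2⟩ := stepRight s e h1sum horth φ2 hco2 hgN1
  set ψ : A →ₗ[k] A →ₗ[k] A := φ2 - delta hmap with hψ
  have hcoψ : IsCocycle ψ := hco2.sub_delta hmap
  -- normalization properties in terms of the basis idempotents
  have N1 : ∀ (x : ℕ) (hx : x ≤ n) (b : A), ψ (B (.e x hx)) b = 0 := by
    intro x hx b
    have hmem : x ∈ Finset.range (n + 1) := Finset.mem_range.mpr (by omega)
    exact hhN1 ⟨x, hmem⟩ (Finset.mem_attach _ _) b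
  have N2 : ∀ (x : ℕ) (hx : x ≤ n) (a : A), ψ a (B (.e x hx)) = 0 := by
    intro x hx a
    have hmem : x ∈ Finset.range (n + 1) := Finset.mem_range.mpr (by omega)
    exact hhN2 ⟨x, hmem⟩ (Finset.mem_attach _ _) a
  have N3 : ∀ (x : ℕ) (hx : x ≤ n) (a b : A),
      B (.e x hx) * ψ a b = ψ (B (.e x hx) * a) b := by
    intro x hx a b
    have hc := hcoψ (B (.e x hx)) a b
    rw [N1 x hx (a * b), N1 x hx a] at hc
    simp only [zero_mul, sub_zero, add_zero] at hc
    exact sub_eq_zero.mp hc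
  have N4 : ∀ (x : ℕ) (hx : x ≤ n) (a b : A),
      ψ a (b * B (.e x hx)) = ψ a b * B (.e x hx) := by
    intro x hx a b
    have hc := hcoψ a b (B (.e x hx))
    rw [N2 x hx b, N2 x hx (a * b)] at hc
    simp only [mul_zero, sub_zero, zero_add] at hc
    exact sub_eq_zero.mp hc
  have N5 : ∀ (x : ℕ) (hx : x ≤ n) (a b : A),
      ψ (a * B (.e x hx)) b = ψ a (B (.e x hx) * b) := by
    intro x hx a b
    have hc := hcoψ a (B (.e x hx)) b
    rw [N1 x hx b, N2 x hx a] at hc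
    simp only [mul_zero, zero_sub, zero_mul, sub_zero] at hc
    exact neg_add_eq_zero.mp hc
  -- vanishing on non-composable pairs
  have K1 : ∀ b a : CylIdx n, b.src ≠ a.tgt → ψ (B b) (B a) = 0 := by
    intro b a hba
    have h1 : B b * B (.e b.src (src_le b)) = B b := by
      rw [Emul B hmul, if_pos rfl]
    have h2 : B (.e b.src (src_le b)) * B a = 0 := by
      rw [mulE B hmul, if_neg hba]
    calc ψ (B b) (B a) = ψ (B b * B (.e b.src (src_le b))) (B a) := by rw [h1]
      _ = ψ (B b) (B (.e b.src (src_le b)) * B a) := N5 b.src (src_le b) _ _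
      _ = 0 := by rw [h2, map_zero]
  -- grading
  have ecast : ∀ (x y : ℕ) (hx : x ≤ n) (hy : y ≤ n), x = y →
      B (.e x hx) = B (.e y hy) := by
    intro x y hx hy h; subst h; rfl
  have hgrade : ∀ b a : CylIdx n,
      B (.e b.tgt (tgt_le b)) * ψ (B b) (B a) * B (.e a.src (src_le a)) = ψ (B b) (B a) := by
    intro b a
    have h1 : B (.e b.tgt (tgt_le b)) * B b = B b := by
      rw [mulE B hmul, if_pos rfl]
    have h2 : B a * B (.e a.src (src_le a)) = B a := by
      rw [Emul B hmul, if_pos rfl]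
    rw [N3 b.tgt (tgt_le b), h1, ← N4 a.src (src_le a), h2]
  -- basic facts about `qq`
  have qq_tgt : ∀ i j (_ : 1 ≤ i) (_ : i ≤ j) (_ : j ≤ n - 1), (qq n i j).tgt = j := by
    intro i j hi hij hjn; rw [qq_eq i j hi hij hjn]; rfl
  have qq_src : ∀ i j (_ : 1 ≤ i) (_ : i ≤ j) (_ : j ≤ n - 1), (qq n i j).src = i - 1 := by
    intro i j hi hij hjn; rw [qq_eq i j hi hij hjn]; rfl
  have qqmul : ∀ i j j', 1 ≤ i → i ≤ j → j < j' → j' ≤ n - 1 →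
      B (qq n (j + 1) j') * B (qq n i j) = B (qq n i j') := by
    intro i j j' hi hij hjj hj'
    rw [qq_eq (j + 1) j' (by omega) (by omega) hj', qq_eq i j hi hij (by omega),
      mulQQ B hmul, if_pos rfl]
  -- the structure coefficients of ψ
  set Rc : ℕ → ℕ → ℕ → k :=
    fun i j j' => B.repr (ψ (B (qq n (j + 1) j')) (B (qq n i j))) (qq n i j') with hRc
  set c0 : k := B.repr (ψ (B .p2) (B .p1)) (qq n 1 (n - 1)) with hc0
  set d : ℕ → ℕ → k := fun i j => if i = 1 then 0 else Rc 1 (i - 1) j with hd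
  -- values of ψ on composable pairs of q-paths
  have K2 : ∀ i j j', 1 ≤ i → i ≤ j → j < j' → j' ≤ n - 1 →
      ψ (B (qq n (j + 1) j')) (B (qq n i j)) = Rc i j j' • B (qq n i j') := by
    intro i j j' hi hij hjj hj'
    have htgt : (qq n i j').tgt = j' := qq_tgt i j' hi (by omega) hj'
    have hsrc : (qq n i j').src = i - 1 := qq_src i j' hi (by omega) hj'
    refine repr_unique B hmul _ (qq n i j') (tgt_le _) (src_le _) ?_ ?_
    · have hb_tgt : (qq n (j + 1) j').tgt = j' := qq_tgt (j + 1) j' (by omega) (by omega) hj'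
      have ha_src : (qq n i j).src = i - 1 := qq_src i j hi hij (by omega)
      rw [ecast (qq n i j').tgt (qq n (j+1) j').tgt _ (tgt_le _) (by rw [htgt, hb_tgt]),
        ecast (qq n i j').src (qq n i j).src _ (src_le _) (by rw [hsrc, ha_src])]
      exact hgrade (qq n (j + 1) j') (qq n i j)
    · intro dd hdt hds
      rw [htgt] at hdt
      rw [hsrc] at hds
      cases dd with
      | e x hx =>
          exfalso
          simp only [CylIdx.tgt] at hdt
          simp only [CylIdx.src] at hds
          omega
      | p1 =>
          exfalso
          simp only [CylIdx.tgt] at hdt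
          omega
      | p2 =>
          exfalso
          simp only [CylIdx.src] at hds
          omega
      | q i2 j2 k1 k2 k3 =>
          simp only [CylIdx.tgt] at hdt
          simp only [CylIdx.src] at hds
          have hii : i2 = i := by omega
          subst hii; subst hdt
          exact (qq_eq _ _ k1 k2 k3).symm
  -- value of ψ on the pair (p₂, p₁)
  have K3 : ψ (B .p2) (B .p1) = c0 • B (qq n 1 (n - 1)) := by
    have htgt : (qq n 1 (n - 1)).tgt = n - 1 := qq_tgt 1 (n - 1) le_rfl (by omega) le_rfl
    have hsrc : (qq n 1 (n - 1)).src = 0 := qq_src 1 (n - 1) le_rfl (by omega) le_rfl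
    refine repr_unique B hmul _ (qq n 1 (n - 1)) (tgt_le _) (src_le _) ?_ ?_
    · rw [ecast (qq n 1 (n-1)).tgt (CylIdx.p2 : CylIdx n).tgt _ (tgt_le _) (by rw [htgt]; rfl),
        ecast (qq n 1 (n-1)).src (CylIdx.p1 : CylIdx n).src _ (src_le _) (by rw [hsrc]; rfl)]
      exact hgrade CylIdx.p2 CylIdx.p1
    · intro dd hdt hds
      rw [htgt] at hdt
      rw [hsrc] at hds
      cases dd with
      | e x hx =>
          exfalso
          simp only [CylIdx.tgt] at hdt
          simp only [CylIdx.src] at hds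
          omega
      | p1 => exfalso; simp only [CylIdx.tgt] at hdt; omega
      | p2 => exfalso; simp only [CylIdx.src] at hds; omega
      | q i2 j2 k1 k2 k3 =>
          simp only [CylIdx.tgt] at hdt
          simp only [CylIdx.src] at hds
          have hii : i2 = 1 := by omega
          subst hii; subst hdt
          exact (qq_eq _ _ k1 k2 k3).symm
  -- the simplicial cocycle relation among the `Rc`
  have hcocy : ∀ i j j' j'', 1 ≤ i → i ≤ j → j < j' → j' < j'' → j'' ≤ n - 1 →
      Rc i j j' - Rc i j j'' + Rc i j' j'' - Rc (j + 1) j' j'' = 0 := by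
    intro i j j' j'' hi hij h1 h2 h3
    have hc := hcoψ (B (qq n (j' + 1) j'')) (B (qq n (j + 1) j')) (B (qq n i j))
    rw [K2 i j j' hi hij h1 (by omega)] at hc
    rw [qqmul (j + 1) j' j'' (by omega) (by omega) h2 h3] at hc
    rw [K2 i j j'' hi hij (by omega) h3] at hc
    rw [qqmul i j j' hi hij h1 (by omega)] at hc
    rw [K2 i j' j'' hi (by omega) h2 h3] at hc
    rw [K2 (j + 1) j' j'' (by omega) (by omega) h2 h3] at hc
    rw [mul_smul_comm, qqmul i j' j'' hi (by omega) h2 h3] at hc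
    rw [smul_mul_assoc, qqmul i j j'' hi hij (by omega) h3] at hc
    rw [← sub_smul, ← add_smul, ← sub_smul] at hc
    have hc2 := congrArg (fun w => B.repr w (qq n i j'')) hc
    simpa [B.repr_self, Finsupp.single_apply] using hc2
  -- the coefficients `Rc` are a coboundary of `d`
  have hrel : ∀ i j j', 1 ≤ i → i ≤ j → j < j' → j' ≤ n - 1 →
      Rc i j j' = d i j - d i j' + d (j + 1) j' := by
    intro i j j' hi hij hjj hj'
    by_cases hi1 : i = 1
    · subst hi1
      show Rc 1 j j' = (if (1:ℕ) = 1 then 0 else _) - (if (1:ℕ) = 1 then 0 else _)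
        + (if j + 1 = 1 then 0 else Rc 1 (j + 1 - 1) j')
      rw [if_pos rfl, if_pos rfl, if_neg (by omega)]
      simp
    · have hco' := hcocy 1 (i - 1) j j' le_rfl (by omega) (by omega) hjj hj'
      have hii : i - 1 + 1 = i := by omega
      rw [hii] at hco'
      show Rc i j j' = (if i = 1 then 0 else Rc 1 (i - 1) j)
        - (if i = 1 then 0 else Rc 1 (i - 1) j')
        + (if j + 1 = 1 then 0 else Rc 1 (j + 1 - 1) j')
      rw [if_neg hi1, if_neg hi1, if_neg (by omega)]
      simp only [Nat.add_sub_cancel]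
      linear_combination -hco'
  -- the 1-cochain
  set dcoef : CylIdx n → k := fun cc => (qIdx cc).elim 0 (fun p => d p.1 p.2) with hdcoef
  set f' : A →ₗ[k] A := B.constr k (fun cc => dcoef cc • B cc) with hf'
  have hf'B : ∀ cc : CylIdx n, f' (B cc) = dcoef cc • B cc :=
    fun cc => B.constr_basis k _ cc
  have hdq : ∀ i j g1 g2 g3, dcoef (CylIdx.q i j g1 g2 g3 : CylIdx n) = d i j := fun _ _ _ _ _ => rfl
  have hdqq : ∀ i j, 1 ≤ i → i ≤ j → j ≤ n - 1 → dcoef (qq n i j) = d i j := by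
    intro i j hi hij hjn
    rw [qq_eq i j hi hij hjn]
    exact hdq i j hi hij hjn
  -- the two trivial-path cases
  have caseEL : ∀ (x : ℕ) (hx : x ≤ n) (a : CylIdx n),
      ψ (B (.e x hx)) (B a) = c0 • μ (B (.e x hx)) (B a) + delta f' (B (.e x hx)) (B a) := by
    intro x hx a
    rw [N1 x hx, hμ0 _ _ (by rintro ⟨h1, -⟩; simp at h1), smul_zero, zero_add, delta_apply,
      hf'B, hf'B]
    have h0 : dcoef (CylIdx.e x hx) = (0 : k) := rfl
    rw [h0, zero_smul, zero_mul, add_zero, mulE B hmul x hx a]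
    by_cases hxa : x = a.tgt
    · rw [if_pos hxa, hf'B, mul_smul_comm, mulE B hmul x hx a, if_pos hxa, sub_self]
    · rw [if_neg hxa, map_zero, mul_smul_comm, mulE B hmul x hx a, if_neg hxa, smul_zero,
        sub_zero]
  have caseER : ∀ (b : CylIdx n) (y : ℕ) (hy : y ≤ n),
      ψ (B b) (B (.e y hy)) = c0 • μ (B b) (B (.e y hy)) + delta f' (B b) (B (.e y hy)) := by
    intro b y hy
    rw [N2 y hy, hμ0 _ _ (by rintro ⟨-, h2⟩; simp at h2), smul_zero, zero_add, delta_apply,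
      hf'B, hf'B]
    have h0 : dcoef (CylIdx.e y hy) = (0 : k) := rfl
    rw [h0, zero_smul, mul_zero, zero_sub, Emul B hmul b y hy]
    by_cases hby : b.src = y
    · rw [if_pos hby, hf'B, smul_mul_assoc, Emul B hmul b y hy, if_pos hby]
      simp
    · rw [if_neg hby, map_zero, smul_mul_assoc, Emul B hmul b y hy, if_neg hby, smul_zero]
      simp
  have h0p1 : dcoef (CylIdx.p1 : CylIdx n) = (0 : k) := rfl
  have h0p2 : dcoef (CylIdx.p2 : CylIdx n) = (0 : k) := rfl
  -- the main case analysis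
  have final : ∀ b a : CylIdx n,
      ψ (B b) (B a) = c0 • μ (B b) (B a) + delta f' (B b) (B a) := by
    intro b a
    cases b with
    | e x hx => exact caseEL x hx a
    | p1 =>
      cases a with
      | e y hy => exact caseER _ y hy
      | p1 =>
        rw [K1 _ _ (by show (0:ℕ) ≠ n; omega), hμ0 _ _ (by rintro ⟨h1, -⟩; simp at h1),
          smul_zero, zero_add, delta_apply, hf'B, h0p1, zero_smul, mul_zero,
          zero_mul, mulP1P1 B hmul, map_zero]
        simp
      | p2 =>
        rw [K1 _ _ (by show (0:ℕ) ≠ n - 1; omega), hμ0 _ _ (by rintro ⟨h1, -⟩; simp at h1),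
          smul_zero, zero_add, delta_apply, hf'B, hf'B, h0p1, h0p2, zero_smul, zero_smul,
          mul_zero, zero_mul, mulP1P2 B hmul, map_zero]
        simp
      | q i j g1 g2 g3 =>
        rw [K1 _ _ (by show (0:ℕ) ≠ j; omega), hμ0 _ _ (by rintro ⟨h1, -⟩; simp at h1),
          smul_zero, zero_add, delta_apply, hf'B, hf'B, h0p1, hdq, zero_smul, zero_mul,
          mulP1Q B hmul, map_zero, mul_smul_comm, mulP1Q B hmul, smul_zero]
        simp
    | p2 =>
      cases a with
      | e y hy => exact caseER _ y hy
      | p1 =>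
        rw [hμ1, delta_apply, hf'B, hf'B, h0p1, h0p2, zero_smul, zero_smul, mul_zero,
          zero_mul, mulP2P1 B hmul, map_zero, K3]
        rw [qq_eq 1 (n-1) le_rfl (by omega) le_rfl]
        simp
      | p2 =>
        rw [K1 _ _ (by show n ≠ n - 1; omega), hμ0 _ _ (by rintro ⟨-, h2⟩; simp at h2),
          smul_zero, zero_add, delta_apply, hf'B, h0p2, zero_smul, mul_zero,
          zero_mul, mulP2P2 B hmul, map_zero]
        simp
      | q i j g1 g2 g3 =>
        rw [K1 _ _ (by show n ≠ j; omega), hμ0 _ _ (by rintro ⟨-, h2⟩; simp at h2),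
          smul_zero, zero_add, delta_apply, hf'B, hf'B, h0p2, hdq, zero_smul, zero_mul,
          mulP2Q B hmul, map_zero, mul_smul_comm, mulP2Q B hmul, smul_zero]
        simp
    | q i' j' h1' h2' h3' =>
      cases a with
      | e y hy => exact caseER _ y hy
      | p1 =>
        rw [K1 _ _ (by show i' - 1 ≠ n; omega), hμ0 _ _ (by rintro ⟨h1, -⟩; simp at h1),
          smul_zero, zero_add, delta_apply, hf'B, hf'B, h0p1, hdq, zero_smul, mul_zero,
          mulQP1 B hmul, map_zero, smul_mul_assoc, mulQP1 B hmul, smul_zero]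
        simp
      | p2 =>
        rw [K1 _ _ (by show i' - 1 ≠ n - 1; omega), hμ0 _ _ (by rintro ⟨-, h2⟩; simp at h2),
          smul_zero, zero_add, delta_apply, hf'B, hf'B, hdq, h0p2, zero_smul, mul_zero,
          mulQP2 B hmul, map_zero, smul_mul_assoc, mulQP2 B hmul, smul_zero]
        simp
      | q i j g1 g2 g3 =>
        by_cases hij' : i' = j + 1
        · subst hij'
          have hbq : (CylIdx.q (j+1) j' h1' h2' h3' : CylIdx n) = qq n (j+1) j' :=
            (qq_eq _ _ _ _ _).symm
          have haq : (CylIdx.q i j g1 g2 g3 : CylIdx n) = qq n i j := (qq_eq _ _ _ _ _).symm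
          rw [hbq, haq, hμ0 _ _ (by rintro ⟨h1, -⟩; rw [qq_eq (j+1) j' (by omega) h2' h3'] at h1; simp at h1),
            smul_zero, zero_add, delta_apply, hf'B, hf'B,
            hdqq i j g1 g2 (by omega), hdqq (j+1) j' (by omega) h2' h3',
            K2 i j j' g1 g2 (by omega) h3',
            qqmul i j j' g1 g2 (by omega) h3',
            mul_smul_comm, qqmul i j j' g1 g2 (by omega) h3',
            hf'B, hdqq i j' g1 (by omega) h3',
            smul_mul_assoc, qqmul i j j' g1 g2 (by omega) h3',
            hrel i j j' g1 g2 (by omega) h3']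
          module
        · have hsrc : (CylIdx.q i' j' h1' h2' h3' : CylIdx n).src ≠ (CylIdx.q i j g1 g2 g3 : CylIdx n).tgt := by
            show i' - 1 ≠ j; omega
          have hz : B (CylIdx.q i' j' h1' h2' h3' : CylIdx n) * B (CylIdx.q i j g1 g2 g3) = 0 := by
            rw [mulQQ B hmul, if_neg hij']
          rw [K1 _ _ hsrc, hμ0 _ _ (by rintro ⟨h1, -⟩; simp at h1), smul_zero, zero_add,
            delta_apply, hf'B, hf'B, hdq, hdq, mul_smul_comm, smul_mul_assoc, hz, map_zero,
            smul_zero, smul_zero]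
          simp
  -- assemble: ψ = c0 • μ + delta f' as bilinear maps
  have hmapeq : ψ = c0 • μ + delta f' := by
    refine B.ext fun b => ?_
    refine B.ext fun a => ?_
    simp only [LinearMap.add_apply, LinearMap.smul_apply]
    exact final b a
  set F : A →ₗ[k] A := f0 + g + hmap + f' with hF
  have hexist : ∀ a b : A, φ a b = c0 • μ a b + a * F b - F (a * b) + F a * b := by
    intro a b
    have h2 : ψ a b = c0 • μ a b + delta f' a b := by
      rw [hmapeq]; simp
    have h3 : ψ a b = φ a b - delta f0 a b - delta g a b - delta hmap a b := by
      rw [hψ, hφ2, hφ1]; simp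
    have h5 : φ a b = ψ a b + delta f0 a b + delta g a b + delta hmap a b := by
      rw [h3]; abel
    rw [h5, h2]
    simp only [hF, LinearMap.add_apply, delta_apply, mul_add, add_mul]
    abel
  refine ⟨c0, ⟨F, hexist⟩, ?_⟩
  -- uniqueness of the scalar
  intro c1 hc1
  obtain ⟨f1, hf1⟩ := hc1
  have hLmul : ∀ w : A, B.repr (B (CylIdx.p2 : CylIdx n) * w)
      (CylIdx.q 1 (n - 1) le_rfl (by omega) le_rfl) = 0 := by
    intro w
    have key : (Finsupp.lapply (CylIdx.q 1 (n - 1) le_rfl (by omega) le_rfl : CylIdx n) ∘ₗ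
        B.repr.toLinearMap ∘ₗ LinearMap.mulLeft k (B (CylIdx.p2 : CylIdx n))) = 0 := by
      refine B.ext fun dd => ?_
      simp only [LinearMap.comp_apply, LinearMap.mulLeft_apply, LinearEquiv.coe_toLinearMap,
        Finsupp.lapply_apply, LinearMap.zero_apply]
      cases dd with
      | e y hy =>
          rw [Emul B hmul]
          split
          · rw [B.repr_self, Finsupp.single_apply, if_neg (by simp)]
          · simp
      | p1 => rw [mulP2P1 B hmul]; simp
      | p2 => rw [mulP2P2 B hmul]; simp
      | q i j g1 g2 g3 => rw [mulP2Q B hmul]; simp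
    have hw := LinearMap.congr_fun key w
    simpa using hw
  have hRmul : ∀ w : A, B.repr (w * B (CylIdx.p1 : CylIdx n))
      (CylIdx.q 1 (n - 1) le_rfl (by omega) le_rfl) = 0 := by
    intro w
    have key : (Finsupp.lapply (CylIdx.q 1 (n - 1) le_rfl (by omega) le_rfl : CylIdx n) ∘ₗ
        B.repr.toLinearMap ∘ₗ LinearMap.mulRight k (B (CylIdx.p1 : CylIdx n))) = 0 := by
      refine B.ext fun dd => ?_
      simp only [LinearMap.comp_apply, LinearMap.mulRight_apply, LinearEquiv.coe_toLinearMap,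
        Finsupp.lapply_apply, LinearMap.zero_apply]
      cases dd with
      | e y hy =>
          rw [mulE B hmul]
          split
          · rw [B.repr_self, Finsupp.single_apply, if_neg (by simp)]
          · simp
      | p1 => rw [mulP1P1 B hmul]; simp
      | p2 => rw [mulP2P1 B hmul]; simp
      | q i j g1 g2 g3 => rw [mulQP1 B hmul]; simp
    have hw := LinearMap.congr_fun key w
    simpa using hw
  have E1 := hf1 (B (CylIdx.p2 : CylIdx n)) (B (CylIdx.p1 : CylIdx n))
  have E2 := hexist (B (CylIdx.p2 : CylIdx n)) (B (CylIdx.p1 : CylIdx n))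
  rw [mulP2P1 B hmul, map_zero, sub_zero, hμ1] at E1 E2
  have E3 := E1.symm.trans E2
  have E4 := congrArg (fun w => B.repr w (CylIdx.q 1 (n - 1) le_rfl (by omega) le_rfl)) E3
  simp only [map_add, Finsupp.add_apply, map_smul, Finsupp.smul_apply, B.repr_self,
    Finsupp.single_eq_same, smul_eq_mul, mul_one] at E4
  rw [hLmul, hRmul, hLmul, hRmul] at E4
  simpa using E4
end

section
/- Let k be a field of characteristic 0 and n ≥ 2 an integer. Let B be the skew-gentle algebra given by the quiver with vertices w₀, …, w_{n−1}, a loop ε at w₀ and a linear chain of arrows r_i : w_{i−1} → w_i (1 ≤ i ≤ n−1), subject to the relations ε² = e_{w₀} and r_{i+1}r_i = 0 for 1 ≤ i ≤ n−2. Then B is isomorphic as a k-algebra to the path algebra D of a linearly oriented quiver of type D_{n+1} modulo all paths of length two; an isomorphism is given by e_{w₀} ↦ e_{w₀⁺} + e_{w₀⁻}, ε ↦ e_{w₀⁺} − e_{w₀⁻}, r₁ ↦ a⁺ + a⁻, and the identity on the remaining idempotents and arrows. -/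
/-- `BIdx n` indexes the `k`-basis of the skew-gentle algebra `B`: the quiver has
vertices `w₀, …, w_{n-1}` (encoded as `0, …, n-1`), a loop `ε` at `w₀` and arrows
`r_i : w_{i-1} → w_i` for `1 ≤ i ≤ n-1`, with relations `ε² = e_{w₀}` and
`r_{i+1} r_i = 0`.  A basis element `⟨i, j, s⟩` records the residue class of the path
`r_j ⋯ r_{i+1} ∘ ε^s` from `w_i` to `w_j` (so necessarily `j ≤ i + 1` by the radical
square zero relations on the `r`'s, and `s = 1` forces `i = 0`): the trivial paths are
`⟨x, x, 0⟩`, the loop `ε` is `⟨0, 0, 1⟩`, the arrow `r_i` is `⟨i-1, i, 0⟩`, and the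
path `r₁ε` is `⟨0, 1, 1⟩`. -/
structure BIdx (n : ℕ) : Type where
  i : ℕ
  j : ℕ
  s : ℕ
  h : i ≤ j ∧ j ≤ i + 1 ∧ j ≤ n - 1 ∧ s ≤ 1 ∧ (s = 1 → i = 0)

/-- Structure constants of the skew-gentle algebra `B`: the product `b · a` of two basis
paths is concatenation, using `ε² = e_{w₀}` (so the `ε`-exponents add modulo `2`), and is
zero if the paths are not composable or the concatenation contains some `r_{i+1} r_i`. -/
def bMul {n : ℕ} (b a : BIdx n) : Option (BIdx n) :=
  if h : b.i = a.j ∧ (a.i = a.j ∨ b.i = b.j) then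
    some ⟨a.i, b.j, (a.s + b.s) % 2, by have ha := a.h; have hb := b.h; omega⟩
  else none

/-- `DIdx n` indexes the `k`-basis of the path algebra `D` of the linearly oriented quiver
of type `D_{n+1}` modulo all paths of length two.  The vertices `w₁, …, w_{n-1}` are
encoded as `1, …, n-1`, the vertex `w₀⁺` as `n` and the vertex `w₀⁻` as `n+1`.  A basis
element is a pair `(i, j)` recording source and target: the trivial paths are the pairs
`(x, x)` for a vertex `x`; the arrow `a⁺ : w₀⁺ → w₁` is `(n, 1)`, the arrow
`a⁻ : w₀⁻ → w₁` is `(n+1, 1)`, and the arrow `r_i : w_{i-1} → w_i` (for `2 ≤ i ≤ n-1`)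
is `(i-1, i)`. -/
structure DIdx (n : ℕ) : Type where
  i : ℕ
  j : ℕ
  h : (i = j ∧ ((1 ≤ i ∧ i ≤ n - 1) ∨ i = n ∨ i = n + 1)) ∨
      (j = 1 ∧ (i = n ∨ i = n + 1)) ∨
      (2 ≤ j ∧ j ≤ n - 1 ∧ i = j - 1)

/-- Structure constants of `D`: products with trivial paths, all other products
(in particular all length-two paths) being zero. -/
def dMul {n : ℕ} (b a : DIdx n) : Option (DIdx n) :=
  if h : b.i = a.j ∧ (a.i = a.j ∨ b.i = b.j) then
    some ⟨a.i, b.j, by have ha := a.h; have hb := b.h; omega⟩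
  else none


section SkewGentleAux

variable {k : Type*} [Field k] {n : ℕ}
variable {D : Type*} [Ring D] [Algebra k D]
variable {B : Type*} [Ring B] [Algebra k B]

noncomputable def fB (BD : Module.Basis (DIdx n) k D) (b : BIdx n) : D :=
  if h0 : b.i = 0 then
    BD ⟨n, if b.j = 0 then n else 1, by
        have hb := b.h; split_ifs with hh <;> omega⟩ +
    (if b.s = 0 then (1 : k) else -1) •
      BD ⟨n + 1, if b.j = 0 then n + 1 else 1, by
        have hb := b.h; split_ifs with hh <;> omega⟩
  else
    BD ⟨b.i, b.j, by have hb := b.h; omega⟩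

noncomputable def gB (hn : 2 ≤ n) (BB : Module.Basis (BIdx n) k B) (d : DIdx n) : B :=
  if h0 : n ≤ d.i then
    (2⁻¹ : k) • BB ⟨0, 2 - d.j, 0, by have hd := d.h; omega⟩ +
    (if d.i = n then (2⁻¹ : k) else -2⁻¹) • BB ⟨0, 2 - d.j, 1, by have hd := d.h; omega⟩
  else
    BB ⟨d.i, d.j, 0, by have hd := d.h; omega⟩

noncomputable def ED (BD : Module.Basis (DIdx n) k D) (i j : ℕ) : D :=
  if h : (i = j ∧ ((1 ≤ i ∧ i ≤ n - 1) ∨ i = n ∨ i = n + 1)) ∨ (j = 1 ∧ (i = n ∨ i = n + 1)) ∨ (2 ≤ j ∧ j ≤ n - 1 ∧ i = j - 1) then BD ⟨i, j, h⟩ else 0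

noncomputable def EB (BB : Module.Basis (BIdx n) k B) (i j s : ℕ) : B :=
  if h : i ≤ j ∧ j ≤ i + 1 ∧ j ≤ n - 1 ∧ s ≤ 1 ∧ (s = 1 → i = 0) then BB ⟨i, j, s, h⟩ else 0

lemma ED_eq (BD : Module.Basis (DIdx n) k D) {i j : ℕ} (h : (i = j ∧ ((1 ≤ i ∧ i ≤ n - 1) ∨ i = n ∨ i = n + 1)) ∨ (j = 1 ∧ (i = n ∨ i = n + 1)) ∨ (2 ≤ j ∧ j ≤ n - 1 ∧ i = j - 1)) :
    BD ⟨i, j, h⟩ = ED BD i j := by unfold ED; rw [dif_pos h]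

lemma ED_ne (BD : Module.Basis (DIdx n) k D) {i j : ℕ} (h : ¬((i = j ∧ ((1 ≤ i ∧ i ≤ n - 1) ∨ i = n ∨ i = n + 1)) ∨ (j = 1 ∧ (i = n ∨ i = n + 1)) ∨ (2 ≤ j ∧ j ≤ n - 1 ∧ i = j - 1))) :
    ED BD i j = 0 := by unfold ED; exact dif_neg h

lemma EB_eq (BB : Module.Basis (BIdx n) k B) {i j s : ℕ} (h : i ≤ j ∧ j ≤ i + 1 ∧ j ≤ n - 1 ∧ s ≤ 1 ∧ (s = 1 → i = 0)) :
    BB ⟨i, j, s, h⟩ = EB BB i j s := by unfold EB; rw [dif_pos h]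

lemma fB_zero (BD : Module.Basis (DIdx n) k D) {j s : ℕ}
    (h : 0 ≤ j ∧ j ≤ 0 + 1 ∧ j ≤ n - 1 ∧ s ≤ 1 ∧ (s = 1 → 0 = 0)) :
    fB BD ⟨0, j, s, h⟩ =
      ED BD n (if j = 0 then n else 1) +
      (if s = 0 then (1 : k) else -1) • ED BD (n + 1) (if j = 0 then n + 1 else 1) := by
  unfold fB
  rw [dif_pos rfl, ED_eq BD, ED_eq BD]

lemma fB_ne (BD : Module.Basis (DIdx n) k D) {i j s : ℕ} (hne : i ≠ 0)
    (h : i ≤ j ∧ j ≤ i + 1 ∧ j ≤ n - 1 ∧ s ≤ 1 ∧ (s = 1 → i = 0)) :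
    fB BD ⟨i, j, s, h⟩ = ED BD i j := by
  unfold fB
  rw [dif_neg hne, ED_eq BD]

lemma gB_ge (hn : 2 ≤ n) (BB : Module.Basis (BIdx n) k B) (i j : ℕ) (hi : n ≤ i)
    (h : (i = j ∧ ((1 ≤ i ∧ i ≤ n - 1) ∨ i = n ∨ i = n + 1)) ∨ (j = 1 ∧ (i = n ∨ i = n + 1)) ∨ (2 ≤ j ∧ j ≤ n - 1 ∧ i = j - 1)) :
    gB hn BB ⟨i, j, h⟩ =
      (2⁻¹ : k) • EB BB 0 (2 - j) 0 +
      (if i = n then (2⁻¹ : k) else -2⁻¹) • EB BB 0 (2 - j) 1 := by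
  unfold gB
  rw [dif_pos hi, EB_eq BB, EB_eq BB]

lemma gB_lt (hn : 2 ≤ n) (BB : Module.Basis (BIdx n) k B) (i j : ℕ) (hlt : i < n)
    (h : (i = j ∧ ((1 ≤ i ∧ i ≤ n - 1) ∨ i = n ∨ i = n + 1)) ∨ (j = 1 ∧ (i = n ∨ i = n + 1)) ∨ (2 ≤ j ∧ j ≤ n - 1 ∧ i = j - 1)) :
    gB hn BB ⟨i, j, h⟩ = EB BB i j 0 := by
  unfold gB
  rw [dif_neg (show ¬ n ≤ i by omega), EB_eq BB]

noncomputable def FFE (BD : Module.Basis (DIdx n) k D) (x : ℕ) : D :=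
  if x = 0 then ED BD n n + ED BD (n + 1) (n + 1) else ED BD x x

end SkewGentleAux

set_option maxHeartbeats 1000000

/-- **The skew-gentle algebra `B` is isomorphic to the type `D_{n+1}` algebra.**
The skew-gentle algebra `B` (loop `ε` at `w₀` with `ε² = e_{w₀}`, chain of arrows
`r_i : w_{i-1} → w_i` with `r_{i+1} r_i = 0`) is isomorphic as a `k`-algebra to
the path algebra `D` of the linearly oriented quiver of type `D_{n+1}` modulo all paths
of length two, via `e_{w₀} ↦ e_{w₀⁺} + e_{w₀⁻}`, `ε ↦ e_{w₀⁺} − e_{w₀⁻}`,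
`r₁ ↦ a⁺ + a⁻`, and the identity on the remaining idempotents and arrows. -/
theorem skew_gentle_iso_Dn
    (k : Type*) [Field k] [CharZero k]
    (n : ℕ) (hn : 2 ≤ n)
    (B : Type*) [Ring B] [Algebra k B]
    (BB : Module.Basis (BIdx n) k B)
    (hB : ∀ b a : BIdx n, BB b * BB a = (bMul b a).elim 0 BB)
    (hB1 : (1 : B) = ∑ x ∈ (Finset.range n).attach,
      BB ⟨x.1, x.1, 0, by have := Finset.mem_range.mp x.2; omega⟩)
    (D : Type*) [Ring D] [Algebra k D]
    (BD : Module.Basis (DIdx n) k D)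
    (hD : ∀ b a : DIdx n, BD b * BD a = (dMul b a).elim 0 BD)
    (hD1 : (1 : D) = ∑ x ∈ (Finset.Icc 1 (n + 1)).attach,
      BD ⟨x.1, x.1, by have := Finset.mem_Icc.mp x.2; omega⟩) :
    ∃ Φ : B ≃ₐ[k] D,
      Φ (BB ⟨0, 0, 0, by omega⟩) = BD ⟨n, n, by omega⟩ + BD ⟨n + 1, n + 1, by omega⟩ ∧
      Φ (BB ⟨0, 0, 1, by omega⟩) = BD ⟨n, n, by omega⟩ - BD ⟨n + 1, n + 1, by omega⟩ ∧
      Φ (BB ⟨0, 1, 0, by omega⟩) = BD ⟨n, 1, by omega⟩ + BD ⟨n + 1, 1, by omega⟩ ∧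
      (∀ (x : ℕ) (h1 : 1 ≤ x) (h2 : x ≤ n - 1),
        Φ (BB ⟨x, x, 0, by omega⟩) = BD ⟨x, x, by omega⟩) ∧
      (∀ (i : ℕ) (h1 : 2 ≤ i) (h2 : i ≤ n - 1),
        Φ (BB ⟨i - 1, i, 0, by omega⟩) = BD ⟨i - 1, i, by omega⟩) := by

  classical
  have e00 : ((0:ℕ) = 0) = True := by norm_num
  have e10 : ((1:ℕ) = 0) = False := by norm_num
  have m00 : ((((0:ℕ) + 0) % 2) = 0) = True := by norm_num
  have m10 : ((((1:ℕ) + 0) % 2) = 0) = False := by norm_num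
  have m01 : ((((0:ℕ) + 1) % 2) = 0) = False := by norm_num
  have m11 : ((((1:ℕ) + 1) % 2) = 0) = True := by norm_num
  let φ : B →ₗ[k] D := BB.constr k (fB BD)
  let ψ : D →ₗ[k] B := BD.constr k (gB hn BB)
  have hφb : ∀ x : BIdx n, φ (BB x) = fB BD x := fun x => BB.constr_basis k _ x
  have hψb : ∀ x : DIdx n, ψ (BD x) = gB hn BB x := fun x => BD.constr_basis k _ x
  have hsome : ∀ z : BIdx n, Option.elim (some z) (0 : B) ⇑BB = BB z := fun _ => rfl
  have hnone : Option.elim (none : Option (BIdx n)) (0 : B) ⇑BB = 0 := rfl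
  have hφE : ∀ (i j s : ℕ) (hc : i ≤ j ∧ j ≤ i + 1 ∧ j ≤ n - 1 ∧ s ≤ 1 ∧ (s = 1 → i = 0)),
      φ (EB BB i j s) = fB BD ⟨i, j, s, hc⟩ := by
    intro i j s hc
    rw [show EB BB i j s = BB ⟨i, j, s, hc⟩ from (EB_eq BB hc).symm, hφb]
  have hψE : ∀ (i j : ℕ) (hc : (i = j ∧ ((1 ≤ i ∧ i ≤ n - 1) ∨ i = n ∨ i = n + 1)) ∨ (j = 1 ∧ (i = n ∨ i = n + 1)) ∨ (2 ≤ j ∧ j ≤ n - 1 ∧ i = j - 1)),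
      ψ (ED BD i j) = gB hn BB ⟨i, j, hc⟩ := by
    intro i j hc
    rw [show ED BD i j = BD ⟨i, j, hc⟩ from (ED_eq BD hc).symm, hψb]
  have DIext : ∀ (a b : DIdx n), a.i = b.i → a.j = b.j → BD a = BD b := by
    rintro ⟨ai', aj', ah'⟩ ⟨bi', bj', bh'⟩ h1 h2
    dsimp only at h1 h2
    subst h1; subst h2
    rfl
  -- products of atoms in D
  have hMul : ∀ (x1 x2 y1 y2 : ℕ) (hc1 : (x1 = x2 ∧ ((1 ≤ x1 ∧ x1 ≤ n - 1) ∨ x1 = n ∨ x1 = n + 1)) ∨ (x2 = 1 ∧ (x1 = n ∨ x1 = n + 1)) ∨ (2 ≤ x2 ∧ x2 ≤ n - 1 ∧ x1 = x2 - 1)) (hc2 : (y1 = y2 ∧ ((1 ≤ y1 ∧ y1 ≤ n - 1) ∨ y1 = n ∨ y1 = n + 1)) ∨ (y2 = 1 ∧ (y1 = n ∨ y1 = n + 1)) ∨ (2 ≤ y2 ∧ y2 ≤ n - 1 ∧ y1 = y2 - 1))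
      (hp : x1 = y2 ∧ (y1 = y2 ∨ x1 = x2)),
      ED BD x1 x2 * ED BD y1 y2 = ED BD y1 x2 := by
    intro x1 x2 y1 y2 hc1 hc2 hp
    have hz : (y1 = x2 ∧ ((1 ≤ y1 ∧ y1 ≤ n - 1) ∨ y1 = n ∨ y1 = n + 1)) ∨ (x2 = 1 ∧ (y1 = n ∨ y1 = n + 1)) ∨ (2 ≤ x2 ∧ x2 ≤ n - 1 ∧ y1 = x2 - 1) := by omega
    rw [show ED BD x1 x2 = BD ⟨x1, x2, hc1⟩ from (ED_eq BD hc1).symm,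
        show ED BD y1 y2 = BD ⟨y1, y2, hc2⟩ from (ED_eq BD hc2).symm,
        show ED BD y1 x2 = BD ⟨y1, x2, hz⟩ from (ED_eq BD hz).symm, hD]
    unfold dMul
    rw [dif_pos hp]
    exact DIext _ _ rfl rfl
  have hMul0 : ∀ (x1 x2 y1 y2 : ℕ) (hp : ¬(x1 = y2 ∧ (y1 = y2 ∨ x1 = x2))),
      ED BD x1 x2 * ED BD y1 y2 = 0 := by
    intro x1 x2 y1 y2 hp
    by_cases hc1 : (x1 = x2 ∧ ((1 ≤ x1 ∧ x1 ≤ n - 1) ∨ x1 = n ∨ x1 = n + 1)) ∨ (x2 = 1 ∧ (x1 = n ∨ x1 = n + 1)) ∨ (2 ≤ x2 ∧ x2 ≤ n - 1 ∧ x1 = x2 - 1)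
    · by_cases hc2 : (y1 = y2 ∧ ((1 ≤ y1 ∧ y1 ≤ n - 1) ∨ y1 = n ∨ y1 = n + 1)) ∨ (y2 = 1 ∧ (y1 = n ∨ y1 = n + 1)) ∨ (2 ≤ y2 ∧ y2 ≤ n - 1 ∧ y1 = y2 - 1)
      · rw [show ED BD x1 x2 = BD ⟨x1, x2, hc1⟩ from (ED_eq BD hc1).symm,
            show ED BD y1 y2 = BD ⟨y1, y2, hc2⟩ from (ED_eq BD hc2).symm, hD]
        unfold dMul
        rw [dif_neg hp]
        rfl
      · rw [ED_ne BD hc2, mul_zero]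
    · rw [ED_ne BD hc1, zero_mul]
  have hA1 : ∀ v, ED BD n v * ED BD n n = ED BD n v := by
    intro v
    by_cases hv : (n = v ∧ ((1 ≤ n ∧ n ≤ n - 1) ∨ n = n ∨ n = n + 1)) ∨ (v = 1 ∧ (n = n ∨ n = n + 1)) ∨ (2 ≤ v ∧ v ≤ n - 1 ∧ n = v - 1)
    · exact hMul n v n n hv (by omega) (by omega)
    · rw [ED_ne BD hv, zero_mul]
  have hA2 : ∀ v, ED BD (n+1) v * ED BD (n+1) (n+1) = ED BD (n+1) v := by
    intro v
    by_cases hv : (n+1 = v ∧ ((1 ≤ n+1 ∧ n+1 ≤ n - 1) ∨ n+1 = n ∨ n+1 = n + 1)) ∨ (v = 1 ∧ (n+1 = n ∨ n+1 = n + 1)) ∨ (2 ≤ v ∧ v ≤ n - 1 ∧ n+1 = v - 1)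
    · exact hMul (n+1) v (n+1) (n+1) hv (by omega) (by omega)
    · rw [ED_ne BD hv, zero_mul]
  have hA3 : ∀ v, ED BD n v * ED BD (n+1) (n+1) = 0 :=
    fun v => hMul0 n v (n+1) (n+1) (by omega)
  have hA4 : ∀ v, ED BD (n+1) v * ED BD n n = 0 :=
    fun v => hMul0 (n+1) v n n (by omega)
  have hA5 : ∀ v, ED BD n v * ED BD n 1 = 0 :=
    fun v => hMul0 n v n 1 (by omega)
  have hA6 : ∀ v, ED BD n v * ED BD (n+1) 1 = 0 :=
    fun v => hMul0 n v (n+1) 1 (by omega)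
  have hA7 : ∀ v, ED BD (n+1) v * ED BD n 1 = 0 :=
    fun v => hMul0 (n+1) v n 1 (by omega)
  have hA8 : ∀ v, ED BD (n+1) v * ED BD (n+1) 1 = 0 :=
    fun v => hMul0 (n+1) v (n+1) 1 (by omega)
  have hE1 : ED BD 1 1 * ED BD n 1 = ED BD n 1 :=
    hMul 1 1 n 1 (by omega) (by omega) (by omega)
  have hE2 : ED BD 1 1 * ED BD (n+1) 1 = ED BD (n+1) 1 :=
    hMul 1 1 (n+1) 1 (by omega) (by omega) (by omega)
  -- multiplicativity on basis vectors
  have key : ∀ x y : BIdx n, φ (BB x * BB y) = φ (BB x) * φ (BB y) := by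
    rintro ⟨bi, bj, bs, hb⟩ ⟨ai, aj, as, ha⟩
    rw [hB]
    unfold bMul
    dsimp only
    by_cases hai : ai = 0
    · subst hai
      by_cases hbi : bi = 0
      · subst hbi
        have h1 : aj ≤ 1 := by omega
        have h2 : as ≤ 1 := by omega
        have h3 : bj ≤ 1 := by omega
        have h4 : bs ≤ 1 := by omega
        interval_cases aj <;> interval_cases as <;> interval_cases bj <;> interval_cases bs <;>
(first
            | rw [dif_pos (show (0:ℕ) = 0 ∧ ((0:ℕ) = 0 ∨ (0:ℕ) = 0) by decide)]
            | rw [dif_pos (show (0:ℕ) = 0 ∧ ((0:ℕ) = 0 ∨ (0:ℕ) = 1) by decide)]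
            | rw [dif_neg (show ¬((0:ℕ) = 1 ∧ ((0:ℕ) = 1 ∨ (0:ℕ) = 0)) by decide)]
            | rw [dif_neg (show ¬((0:ℕ) = 1 ∧ ((0:ℕ) = 1 ∨ (0:ℕ) = 1)) by decide)]) <;>
          (simp only [hsome, hnone, map_zero, hφb, fB_zero, e00, e10, m00, m10, m01, m11, if_true, if_false, one_smul, mul_add,
                  add_mul, smul_mul_assoc, mul_smul_comm, smul_smul, hA1, hA2, hA3, hA4,
                  hA5, hA6, hA7, hA8, smul_zero, zero_smul, add_zero, zero_add, neg_mul,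
                  mul_neg, neg_neg, one_mul, mul_one, neg_smul] <;> match_scalars <;> norm_num)
      · -- bi ≠ 0, ai = 0
        have haj : aj = 0 ∨ aj = 1 := by omega
        rcases haj with rfl | rfl
        · rw [dif_neg (by omega)]
          simp only [hnone, map_zero]
          rw [hφb, hφb, fB_ne BD hbi, fB_zero BD]
          simp only [e00, e10, m00, m10, m01, m11, if_true, if_false]
          rw [mul_add, mul_smul_comm, hMul0 bi bj n n (by omega),
              hMul0 bi bj (n+1) (n+1) (by omega), smul_zero, add_zero]
        · by_cases hc : bi = 1 ∧ bj = 1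
          · obtain ⟨rfl, rfl⟩ := hc
            have hbs : bs = 0 := by omega
            subst hbs
            rw [dif_pos ⟨rfl, Or.inr rfl⟩]
            rw [hsome, hφb, hφb, hφb, fB_ne BD hbi, fB_zero BD, fB_zero BD]
            have has : as ≤ 1 := by omega
            interval_cases as <;>
              (simp only [e00, e10, m00, m10, m01, m11, if_true, if_false, one_smul, mul_add,
                  mul_smul_comm, mul_neg, neg_mul, neg_neg, hE1, hE2, neg_smul]
                <;> match_scalars <;> norm_num)
          · rw [dif_neg (by omega)]
            simp only [hnone, map_zero]
            rw [hφb, hφb, fB_ne BD hbi, fB_zero BD]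
            simp only [e00, e10, m00, m10, m01, m11, if_true, if_false]
            rw [mul_add, mul_smul_comm, hMul0 bi bj n 1 (by omega),
                hMul0 bi bj (n+1) 1 (by omega), smul_zero, add_zero]
    · -- ai ≠ 0
      by_cases hbi : bi = 0
      · subst hbi
        rw [dif_neg (by omega)]
        simp only [hnone, map_zero]
        rw [hφb, hφb, fB_zero BD, fB_ne BD hai]
        rw [add_mul, smul_mul_assoc, hMul0 n (if bj = 0 then n else 1) ai aj (by omega),
            hMul0 (n+1) (if bj = 0 then n + 1 else 1) ai aj (by omega), smul_zero, add_zero]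
      · by_cases hc : bi = aj ∧ (ai = aj ∨ bi = bj)
        · rw [dif_pos hc]
          rw [hsome, hφb, hφb, hφb, fB_ne BD hai, fB_ne BD hbi, fB_ne BD hai,
              hMul bi bj ai aj (by omega) (by omega) hc]
        · rw [dif_neg hc]
          simp only [hnone, map_zero]
          rw [hφb, hφb, fB_ne BD hbi, fB_ne BD hai, hMul0 bi bj ai aj hc]
  -- ψ is a left and right inverse of φ
  have hψφ : ∀ x : BIdx n, ψ (φ (BB x)) = BB x := by
    rintro ⟨i, j, s, h⟩
    rw [hφb]
    by_cases hi : i = 0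
    · subst hi
      rw [fB_zero BD, show BB (⟨0, j, s, h⟩ : BIdx n) = EB BB 0 j s from EB_eq BB h]
      have hj : j ≤ 1 := by omega
      have hs : s ≤ 1 := by omega
      interval_cases j <;> interval_cases s <;>
        · simp only [e00, e10, m00, m10, m01, m11, if_true, if_false]
          first
            | rw [map_add, map_smul, hψE n n (by omega), hψE (n+1) (n+1) (by omega),
                  gB_ge hn BB n n le_rfl, gB_ge hn BB (n+1) (n+1) (Nat.le_succ n)]
            | rw [map_add, map_smul, hψE n 1 (by omega), hψE (n+1) 1 (by omega),
                  gB_ge hn BB n 1 le_rfl, gB_ge hn BB (n+1) 1 (Nat.le_succ n)]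
          rw [if_pos rfl, if_neg (Nat.succ_ne_self n)]
          simp only [show (2:ℕ) - n = 0 from by omega, show (2:ℕ) - (n+1) = 0 from by omega,
              show (2:ℕ) - 1 = 1 from by norm_num]
          match_scalars <;> norm_num
    · have hs : s = 0 := by omega
      subst hs
      rw [fB_ne BD hi, show BB (⟨i, j, 0, h⟩ : BIdx n) = EB BB i j 0 from EB_eq BB h,
          hψE i j (by omega), gB_lt hn BB i j (by omega)]
  have hφψ : ∀ x : DIdx n, φ (ψ (BD x)) = BD x := by
    rintro ⟨i, j, h⟩
    rw [hψb, show BD (⟨i, j, h⟩ : DIdx n) = ED BD i j from ED_eq BD h]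
    by_cases hi : n ≤ i
    · rw [gB_ge hn BB i j hi]
      have hii : i = n ∨ i = n + 1 := by omega
      have hjj : j = 1 ∨ j = i := by omega
      rw [map_add, map_smul, map_smul, hφE 0 (2-j) 0 (by omega), hφE 0 (2-j) 1 (by omega),
          fB_zero BD, fB_zero BD]
      rcases hii with h5 | h5 <;> rcases hjj with h6 | h6 <;>
        · simp only [h5, h6, show (2:ℕ) - n = 0 from by omega,
              show (2:ℕ) - (n+1) = 0 from by omega,
              show (2:ℕ) - 1 = 1 from by norm_num, eq_self_iff_true,
              eq_false (show ¬((n+1:ℕ) = n) from by omega), e00, e10, m00, m10, m01, m11,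
              if_true, if_false]
          match_scalars <;> norm_num
    · rw [gB_lt hn BB i j (by omega), hφE i j 0 (by omega), fB_ne BD (by omega)]
  -- φ maps 1 to 1
  have hL : φ (1 : B) = ∑ x ∈ Finset.range n, FFE BD x := by
    rw [hB1, map_sum]
    trans (∑ x ∈ (Finset.range n).attach, FFE BD x.1)
    · refine Finset.sum_congr rfl fun x _ => ?_
      have hx := Finset.mem_range.mp x.2
      rw [hφb]
      by_cases h0 : (x : ℕ) = 0
      · simp only [h0]
        rw [fB_zero BD]
        simp only [e00, e10, m00, m10, m01, m11, if_true, if_false, one_smul]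
        rw [show FFE BD 0 = ED BD n n + ED BD (n+1) (n+1) from if_pos rfl]
      · rw [fB_ne BD h0, show FFE BD (x : ℕ) = ED BD (x : ℕ) (x : ℕ) from if_neg h0]
    · exact Finset.sum_attach (Finset.range n) (FFE BD)
  have h1D : (1 : D) = ∑ x ∈ Finset.Icc 1 (n+1), ED BD x x := by
    rw [hD1]
    trans (∑ x ∈ (Finset.Icc 1 (n+1)).attach, ED BD x.1 x.1)
    · exact Finset.sum_congr rfl fun x _ => ED_eq BD _
    · exact Finset.sum_attach (Finset.Icc 1 (n+1)) (fun y => ED BD y y)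
  have hrange : Finset.range n = insert 0 (Finset.Icc 1 (n-1)) := by
    ext y
    simp only [Finset.mem_range, Finset.mem_insert, Finset.mem_Icc]
    omega
  have hsplit : ∑ x ∈ Finset.range n, FFE BD x
      = ED BD n n + ED BD (n+1) (n+1) + ∑ x ∈ Finset.Icc 1 (n-1), ED BD x x := by
    rw [hrange, Finset.sum_insert (by simp),
        show FFE BD 0 = ED BD n n + ED BD (n+1) (n+1) from if_pos rfl]
    exact congrArg (ED BD n n + ED BD (n+1) (n+1) + ·)
      (Finset.sum_congr rfl fun y hy => by
        have hy' := Finset.mem_Icc.mp hy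
        exact if_neg (by omega))
  have hIcc : ∑ x ∈ Finset.Icc 1 (n+1), ED BD x x
      = (∑ x ∈ Finset.Icc 1 (n-1), ED BD x x) + ED BD n n + ED BD (n+1) (n+1) := by
    have e1 : n + 1 = (n - 1 + 1) + 1 := by omega
    rw [e1, Finset.sum_Icc_succ_top (show (1:ℕ) ≤ n - 1 + 1 + 1 by omega),
        Finset.sum_Icc_succ_top (show (1:ℕ) ≤ n - 1 + 1 by omega),
        show n - 1 + 1 = n from by omega]
  have hone : φ (1 : B) = 1 := by
    rw [hL, hsplit, h1D, hIcc]
    abel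
  -- bilinear extension of key
  have heq : (LinearMap.mul k B).compr₂ φ = (LinearMap.mul k D).compl₁₂ φ φ := by
    refine Module.Basis.ext BB fun x => ?_
    refine Module.Basis.ext BB fun y => ?_
    simp only [LinearMap.compr₂_apply, LinearMap.mul_apply', LinearMap.compl₁₂_apply]
    exact key x y
  have hmul : ∀ x y : B, φ (x * y) = φ x * φ y := by
    intro x y
    have h' := LinearMap.congr_fun (LinearMap.congr_fun heq x) y
    simpa only [LinearMap.compr₂_apply, LinearMap.mul_apply', LinearMap.compl₁₂_apply] using h'
  -- assemble the algebra isomorphism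
  have h1 : φ.comp ψ = LinearMap.id := Module.Basis.ext BD fun x => by
    simpa only [LinearMap.comp_apply, LinearMap.id_apply] using hφψ x
  have h2 : ψ.comp φ = LinearMap.id := Module.Basis.ext BB fun x => by
    simpa only [LinearMap.comp_apply, LinearMap.id_apply] using hψφ x
  refine ⟨AlgEquiv.ofLinearEquiv (LinearEquiv.ofLinear φ ψ h1 h2)
      (by rw [LinearEquiv.ofLinear_apply]; exact hone)
      (fun x y => by simp only [LinearEquiv.ofLinear_apply]; exact hmul x y),
      ?_, ?_, ?_, ?_, ?_⟩
  · rw [AlgEquiv.ofLinearEquiv_apply, LinearEquiv.ofLinear_apply, hφb, fB_zero BD,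
        ED_eq BD, ED_eq BD]
    simp only [e00, e10, m00, m10, m01, m11, if_true, if_false, one_smul]
  · rw [AlgEquiv.ofLinearEquiv_apply, LinearEquiv.ofLinear_apply, hφb, fB_zero BD,
        ED_eq BD, ED_eq BD]
    simp only [e00, e10, m00, m10, m01, m11, if_true, if_false]
    module
  · rw [AlgEquiv.ofLinearEquiv_apply, LinearEquiv.ofLinear_apply, hφb, fB_zero BD,
        ED_eq BD, ED_eq BD]
    simp only [e00, e10, m00, m10, m01, m11, if_true, if_false, one_smul]
  · intro x hx1 hx2
    rw [AlgEquiv.ofLinearEquiv_apply, LinearEquiv.ofLinear_apply, hφb,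
        fB_ne BD (by omega), ED_eq BD]
  · intro i hi1 hi2
    rw [AlgEquiv.ofLinearEquiv_apply, LinearEquiv.ofLinear_apply, hφb,
        fB_ne BD (by omega), ED_eq BD]
end

section
/- Let k be a field of characteristic 0. Let C be the k-algebra given by the quiver with vertices x₀, x₁, x₂, x₃, chain arrows a₁ : x₀ → x₁, a₂ : x₁ → x₂, a₃ : x₂ → x₃ and a loop ε at x₃, subject to the single relation ε² = e_{x₃}. Then C is isomorphic as a k-algebra to the path algebra (with no relations) of the quiver of type D₅ with vertices y₀, y₁, y₂, y₊, y₋ and arrows b₁ : y₀ → y₁, b₂ : y₁ → y₂, c₊ : y₂ → y₊, c₋ : y₂ → y₋. -/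
structure CIdx : Type where
  i : ℕ
  j : ℕ
  s : ℕ
  h : i ≤ j ∧ j ≤ 3 ∧ s ≤ 1 ∧ (s = 1 → j = 3)

def cMul (b a : CIdx) : Option CIdx :=
  if hc : b.i = a.j then
    some ⟨a.i, b.j, (a.s + b.s) % 2, by have ha := a.h; have hb := b.h; omega⟩
  else none

structure D5Idx : Type where
  i : ℕ
  j : ℕ
  h : i ≤ j ∧ j ≤ 4 ∧ (i = j ∨ i ≤ 2)

def d5Mul (b a : D5Idx) : Option D5Idx :=
  if hc : b.i = a.j then
    some ⟨a.i, b.j, by have ha := a.h; have hb := b.h; omega⟩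
  else none

/-- The image of a `C`-basis path under the isomorphism, expressed in the `D₅` basis. -/
def phiFun {D : Type*} [Ring D] (BD : D5Idx → D) (x : CIdx) : D :=
  if h2 : x.j ≤ 2 then BD ⟨x.i, x.j, by have := x.h; omega⟩
  else if x.s = 0 then
    BD ⟨x.i, 3, by have := x.h; omega⟩
      + BD ⟨if x.i = 3 then 4 else x.i, 4, by have := x.h; split <;> omega⟩
  else
    BD ⟨x.i, 3, by have := x.h; omega⟩
      - BD ⟨if x.i = 3 then 4 else x.i, 4, by have := x.h; split <;> omega⟩

/-- The image of a `D₅`-basis path under the inverse isomorphism. -/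
def psiFun (k : Type*) {C : Type*} [Field k] [Ring C] [Module k C]
    (BC : CIdx → C) (y : D5Idx) : C :=
  if h2 : y.j ≤ 2 then BC ⟨y.i, y.j, 0, by have := y.h; omega⟩
  else if h3 : y.j = 3 then
    (2⁻¹ : k) • (BC ⟨y.i, 3, 0, by have := y.h; omega⟩ + BC ⟨y.i, 3, 1, by have := y.h; omega⟩)
  else
    (2⁻¹ : k) • (BC ⟨if y.i = 4 then 3 else y.i, 3, 0, by have := y.h; split <;> omega⟩
      - BC ⟨if y.i = 4 then 3 else y.i, 3, 1, by have := y.h; split <;> omega⟩)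

set_option maxHeartbeats 1000000 in
theorem phi_mul_compat {D : Type*} [Ring D] (BD : D5Idx → D)
    (hD : ∀ b a : D5Idx, BD b * BD a = (d5Mul b a).elim 0 BD) (b a : CIdx) :
    (cMul b a).elim 0 (phiFun BD) = phiFun BD b * phiFun BD a := by
  obtain ⟨bi, bj, bs, hb1, hb2, hb3, hb4⟩ := b
  obtain ⟨ai, aj, as, ha1, ha2, ha3, ha4⟩ := a
  interval_cases aj <;> interval_cases ai <;> interval_cases as <;>
    interval_cases bj <;> interval_cases bi <;> interval_cases bs <;>
    first
      | omega
      | simp [cMul, phiFun, d5Mul, hD, mul_add, add_mul, mul_sub, sub_mul,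
          sub_eq_add_neg]

set_option maxHeartbeats 1000000 in
/-- **The algebra `C` is isomorphic to the path algebra of `D₅`.**  The path algebra of
the quiver `x₀ → x₁ → x₂ → x₃` with a loop `ε` at `x₃`, modulo the single relation
`ε² = e_{x₃}`, is isomorphic as a `k`-algebra to the path algebra (with no relations) of
the quiver of type `D₅` with vertices `y₀, y₁, y₂, y₊, y₋` and arrows `b₁ : y₀ → y₁`,
`b₂ : y₁ → y₂`, `c₊ : y₂ → y₊`, `c₋ : y₂ → y₋`. -/
theorem loop_algebra_iso_D5
    (k : Type*) [Field k] [CharZero k]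
    (C : Type*) [Ring C] [Algebra k C]
    (BC : Module.Basis CIdx k C)
    (hC : ∀ b a : CIdx, BC b * BC a = (cMul b a).elim 0 BC)
    (hC1 : (1 : C) = ∑ x ∈ (Finset.range 4).attach,
      BC ⟨x.1, x.1, 0, by have := Finset.mem_range.mp x.2; omega⟩)
    (D : Type*) [Ring D] [Algebra k D]
    (BD : Module.Basis D5Idx k D)
    (hD : ∀ b a : D5Idx, BD b * BD a = (d5Mul b a).elim 0 BD)
    (hD1 : (1 : D) = ∑ x ∈ (Finset.range 5).attach,
      BD ⟨x.1, x.1, by have := Finset.mem_range.mp x.2; omega⟩) :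
    Nonempty (C ≃ₐ[k] D) := by
  classical
  set F : C →ₗ[k] D := BC.constr k (phiFun ⇑BD) with hFdef
  set G : D →ₗ[k] C := BD.constr k (psiFun k ⇑BC) with hGdef
  have hF : ∀ x : CIdx, F (BC x) = phiFun ⇑BD x := fun x => BC.constr_basis k _ x
  have hG : ∀ y : D5Idx, G (BD y) = psiFun k ⇑BC y := fun y => BD.constr_basis k _ y
  have hGF : G.comp F = LinearMap.id := by
    apply BC.ext; intro x
    rw [LinearMap.comp_apply, hF, LinearMap.id_apply]
    obtain ⟨i, j, s, h1, h2, h3, h4⟩ := x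
    interval_cases j <;> interval_cases i <;> interval_cases s <;>
      first
        | omega
        | (simp [phiFun, psiFun, hG]; done)
        | (simp [phiFun, psiFun, hG, map_add, map_sub]
           match_scalars <;> norm_num)
  have hFG : F.comp G = LinearMap.id := by
    apply BD.ext; intro y
    rw [LinearMap.comp_apply, hG, LinearMap.id_apply]
    obtain ⟨i, j, h1, h2, h3⟩ := y
    interval_cases j <;> interval_cases i <;>
      first
        | omega
        | (simp [phiFun, psiFun, hF]; done)
        | (simp [phiFun, psiFun, hF, map_add, map_sub, map_smul]
           match_scalars <;> norm_num)
  let E : C ≃ₗ[k] D := LinearEquiv.ofLinear F G hFG hGF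
  have hEF : ∀ x : C, E x = F x := fun _ => rfl
  have hmul : ∀ x y : C, E (x * y) = E x * E y := by
    simp only [hEF]
    rw [LinearMap.map_mul_iff]
    apply BC.ext; intro i
    apply BC.ext; intro j
    simp only [LinearMap.compr₂_apply, LinearMap.mul_apply', LinearMap.compl₂_apply,
      LinearMap.comp_apply]
    rw [hC, hF, hF, ← phi_mul_compat ⇑BD hD]
    cases hc : cMul i j with
    | none => simp
    | some c => simp [hF]
  have hone : E 1 = 1 := by
    rw [hEF]
    have s1 : F 1 = ∑ n ∈ Finset.range 4,
        (fun n => if h : n < 4 then phiFun ⇑BD ⟨n, n, 0, by omega⟩ else 0) n := by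
      rw [hC1, map_sum, ← Finset.sum_attach (Finset.range 4)
        (fun n => if h : n < 4 then phiFun ⇑BD ⟨n, n, 0, by omega⟩ else 0)]
      refine Finset.sum_congr rfl fun x _ => ?_
      rw [hF, dif_pos (Finset.mem_range.mp x.2)]
    have s2 : (1 : D) = ∑ n ∈ Finset.range 5,
        (fun n => if h : n < 5 then BD ⟨n, n, by omega⟩ else 0) n := by
      rw [hD1, ← Finset.sum_attach (Finset.range 5)
        (fun n => if h : n < 5 then BD ⟨n, n, by omega⟩ else 0)]
      exact Finset.sum_congr rfl fun x _ => by rw [dif_pos (Finset.mem_range.mp x.2)]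
    rw [s1, s2]
    simp only [Finset.sum_range_succ, Finset.sum_range_zero]
    norm_num [phiFun]
    abel
  exact ⟨AlgEquiv.ofLinearEquiv E hone hmul⟩
end
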